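/- Let p ≥ 1 be an odd integer, κ < 0 and λ > 0 real numbers, and set c := (−κ/λ)^{1/p} > 0. Suppose y : [0,∞) → ℝ is differentiable and satisfies the scalar modal ODE ẏ(t) = κ·y(t) + λ·y(t)^{p+1} for all t ≥ 0 with y(0) < c. Then y(t) < c for all t ≥ 0 (forward invariance of the half-line (−∞, c)) and y(t) → 0 as t → ∞. -/

import Mathlib

open Set Filter Real

private lemma myLipOn {F F' : ℝ → ℝ} (hFd : ∀ x, HasDerivAt F (F' x) x)
    (hF' : Continuous F') (R : ℝ) : ∃ K : NNReal, LipschitzOnWith K F (Icc (-R) R) := by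
  obtain ⟨B, hB⟩ := (isCompact_Icc (a := -R) (b := R)).exists_bound_of_continuousOn
    hF'.continuousOn
  refine ⟨B.toNNReal, (convex_Icc _ _).lipschitzOnWith_of_nnnorm_hasDerivWithin_le
    (fun x hx => (hFd x).hasDerivWithinAt) (fun x hx => ?_)⟩
  have h1 : ‖F' x‖ ≤ B := hB x hx
  have h2 : (‖F' x‖₊ : ℝ) ≤ (B.toNNReal : ℝ) := by
    rw [coe_nnnorm, Real.coe_toNNReal _ ((norm_nonneg _).trans h1)]
    exact h1
  exact_mod_cast h2

private lemma myNoTouch {F F' : ℝ → ℝ} (hFd : ∀ x, HasDerivAt F (F' x) x)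
    (hF' : Continuous F') {a : ℝ} (ha : F a = 0)
    {y : ℝ → ℝ} (hy : ∀ t, 0 ≤ t → HasDerivAt y (F (y t)) t)
    (h0 : y 0 ≠ a) : ∀ t, 0 ≤ t → y t ≠ a := by
  intro t ht hyt
  have hcont : ContinuousOn y (Icc 0 t) := fun s hs =>
    ((hy s hs.1).continuousAt).continuousWithinAt
  obtain ⟨C, hC⟩ := (isCompact_Icc (a := (0:ℝ)) (b := t)).exists_bound_of_continuousOn hcont
  set R : ℝ := max C |a| with hR
  obtain ⟨K, hK⟩ := myLipOn hFd hF' R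
  have hmem : ∀ s ∈ Icc (0:ℝ) t, y s ∈ Icc (-R) R := by
    intro s hs
    have := hC s hs
    rw [Real.norm_eq_abs] at this
    have : |y s| ≤ R := this.trans (le_max_left _ _)
    exact ⟨neg_le_of_abs_le this, le_of_abs_le this⟩
  have hamem : a ∈ Icc (-R) R :=
    ⟨neg_le_of_abs_le (le_max_right C |a|), le_of_abs_le (le_max_right C |a|)⟩
  have heq : EqOn y (fun _ => a) (Icc 0 t) := by
    apply ODE_solution_unique_of_mem_Icc_left
      (v := fun _ x => F x) (s := fun _ => Icc (-R) R) (K := K)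
      (fun _ _ => hK) hcont
      (fun s hs => (hy s hs.1.le).hasDerivWithinAt)
      (fun s hs => hmem s ⟨hs.1.le, hs.2⟩)
      continuousOn_const
      (fun s hs => by
        have h : HasDerivWithinAt (fun _ : ℝ => a) (F a) (Iic s) s := by
          rw [ha]; exact hasDerivWithinAt_const _ _ _
        exact h)
      (fun s hs => hamem) hyt
  exact h0 (heq ⟨le_refl 0, ht⟩)

private lemma myStaysBelow {F F' : ℝ → ℝ} (hFd : ∀ x, HasDerivAt F (F' x) x)
    (hF' : Continuous F') {a : ℝ} (ha : F a = 0)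
    {y : ℝ → ℝ} (hy : ∀ t, 0 ≤ t → HasDerivAt y (F (y t)) t)
    (h0 : y 0 < a) : ∀ t, 0 ≤ t → y t < a := by
  intro t ht
  have hne := myNoTouch hFd hF' ha hy (ne_of_lt h0)
  rcases lt_or_ge (y t) a with h | h
  · exact h
  exfalso
  have h' : a < y t := lt_of_le_of_ne h (fun e => hne t ht e.symm)
  have hcont : ContinuousOn y (Icc 0 t) := fun s hs =>
    ((hy s hs.1).continuousAt).continuousWithinAt
  obtain ⟨s, hs, hys⟩ := intermediate_value_Icc ht hcont ⟨h0.le, h'.le⟩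
  exact hne s hs.1 hys

private lemma myStaysAbove {F F' : ℝ → ℝ} (hFd : ∀ x, HasDerivAt F (F' x) x)
    (hF' : Continuous F') {a : ℝ} (ha : F a = 0)
    {y : ℝ → ℝ} (hy : ∀ t, 0 ≤ t → HasDerivAt y (F (y t)) t)
    (h0 : a < y 0) : ∀ t, 0 ≤ t → a < y t := by
  intro t ht
  have hne := myNoTouch hFd hF' ha hy (ne_of_gt h0)
  rcases lt_or_ge a (y t) with h | h
  · exact h
  exfalso
  have h' : y t < a := lt_of_le_of_ne h (hne t ht)
  have hcont : ContinuousOn y (Icc 0 t) := fun s hs =>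
    ((hy s hs.1).continuousAt).continuousWithinAt
  obtain ⟨s, hs, hys⟩ := intermediate_value_Icc' ht hcont ⟨h'.le, h0.le⟩
  exact hne s hs.1 hys

private lemma myConstSol {F F' : ℝ → ℝ} (hFd : ∀ x, HasDerivAt F (F' x) x)
    (hF' : Continuous F') {a : ℝ} (ha : F a = 0)
    {y : ℝ → ℝ} (hy : ∀ t, 0 ≤ t → HasDerivAt y (F (y t)) t)
    (h0 : y 0 = a) : ∀ t, 0 ≤ t → y t = a := by
  intro t ht
  have hcont : ContinuousOn y (Icc 0 t) := fun s hs =>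
    ((hy s hs.1).continuousAt).continuousWithinAt
  obtain ⟨C, hC⟩ := (isCompact_Icc (a := (0:ℝ)) (b := t)).exists_bound_of_continuousOn hcont
  set R : ℝ := max C |a| with hR
  obtain ⟨K, hK⟩ := myLipOn hFd hF' R
  have hmem : ∀ s ∈ Icc (0:ℝ) t, y s ∈ Icc (-R) R := by
    intro s hs
    have := hC s hs
    rw [Real.norm_eq_abs] at this
    have : |y s| ≤ R := this.trans (le_max_left _ _)
    exact ⟨neg_le_of_abs_le this, le_of_abs_le this⟩
  have hamem : a ∈ Icc (-R) R :=
    ⟨neg_le_of_abs_le (le_max_right C |a|), le_of_abs_le (le_max_right C |a|)⟩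
  have heq : EqOn y (fun _ => a) (Icc 0 t) := by
    apply ODE_solution_unique_of_mem_Icc_right
      (v := fun _ x => F x) (s := fun _ => Icc (-R) R) (K := K)
      (fun _ _ => hK) hcont
      (fun s hs => (hy s hs.1).hasDerivWithinAt)
      (fun s hs => hmem s ⟨hs.1, hs.2.le⟩)
      continuousOn_const
      (fun s hs => by
        have h : HasDerivWithinAt (fun _ : ℝ => a) (F a) (Ici s) s := by
          rw [ha]; exact hasDerivWithinAt_const _ _ _
        exact h)
      (fun s hs => hamem) h0
  exact heq ⟨ht, le_refl t⟩

/-- For odd p, κ < 0 < λ, the half-line (−∞, c) with c = (−κ/λ)^{1/p}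
is forward invariant and attracts to the origin. -/
theorem stmt_7 (p : ℕ) (hp : 1 ≤ p) (hpo : Odd p) (κ lam : ℝ)
    (hκ : κ < 0) (hlam : 0 < lam)
    (c : ℝ) (hc : c = ((-κ) / lam) ^ ((1 : ℝ) / (p : ℝ)))
    (y : ℝ → ℝ)
    (hy : ∀ t : ℝ, 0 ≤ t → HasDerivAt y (κ * y t + lam * y t ^ (p + 1)) t)
    (hy0 : y 0 < c) :
    (∀ t : ℝ, 0 ≤ t → y t < c)
    ∧ Filter.Tendsto y Filter.atTop (nhds 0) := by
  have hpR : (p : ℝ) ≠ 0 := Nat.cast_ne_zero.2 (by omega)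
  set F : ℝ → ℝ := fun x => κ * x + lam * x ^ (p + 1) with hFdef
  set F' : ℝ → ℝ := fun x => κ + lam * ((p + 1) * x ^ p) with hF'def
  have hFd : ∀ x : ℝ, HasDerivAt F (F' x) x := by
    intro x
    have h1 : HasDerivAt (fun x : ℝ => κ * x) (κ * 1) x := (hasDerivAt_id x).const_mul κ
    have h2 : HasDerivAt (fun x : ℝ => lam * x ^ (p + 1))
        (lam * ((p + 1) * x ^ p)) x := by
      simpa using (hasDerivAt_pow (p + 1) x).const_mul lam
    exact (h1.add h2).congr_deriv (by simp [F'])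
  have hF'c : Continuous F' := by
    apply Continuous.add continuous_const
    exact continuous_const.mul (continuous_const.mul (continuous_pow p))
  have hy' : ∀ t : ℝ, 0 ≤ t → HasDerivAt y (F (y t)) t := hy
  have hbase : 0 < (-κ) / lam := div_pos (neg_pos.2 hκ) hlam
  have hc0 : 0 < c := hc ▸ Real.rpow_pos_of_pos hbase _
  have hcp : c ^ p = (-κ) / lam := by
    rw [hc, ← Real.rpow_natCast (((-κ) / lam) ^ ((1:ℝ) / (p:ℝ))) p,
      ← Real.rpow_mul hbase.le, one_div, inv_mul_cancel₀ hpR, Real.rpow_one]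
  have hlcp : lam * c ^ p = -κ := by
    rw [hcp]; field_simp
  have hFc : F c = 0 := by
    simp only [F, pow_succ]
    rw [← mul_assoc, hlcp]; ring
  have hF0 : F 0 = 0 := by simp [F]
  have hinv : ∀ t : ℝ, 0 ≤ t → y t < c := myStaysBelow hFd hF'c hFc hy' hy0
  refine ⟨hinv, ?_⟩
  rcases lt_trichotomy (y 0) 0 with hneg | hzero | hpos
  · -- negative case : y 0 < 0
    have hbelow : ∀ t, 0 ≤ t → y t < 0 := myStaysBelow hFd hF'c hF0 hy' hneg
    have hpe : Even (p + 1) := by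
      rcases hpo with ⟨m, hm⟩; exact ⟨m + 1, by omega⟩
    set g : ℝ → ℝ := fun t => y t * Real.exp (-κ * t) with hgdef
    have hg : ∀ t : ℝ, 0 ≤ t → HasDerivAt g
        ((lam * y t ^ (p + 1)) * Real.exp (-κ * t)) t := by
      intro t ht
      have he : HasDerivAt (fun t : ℝ => Real.exp (-κ * t))
          (Real.exp (-κ * t) * (-κ * 1)) t := ((hasDerivAt_id t).const_mul (-κ)).exp
      have := (hy' t ht).mul he
      exact this.congr_deriv (by simp only [F]; ring)
    have hmono : MonotoneOn g (Ici 0) := by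
      apply monotoneOn_of_deriv_nonneg (convex_Ici 0)
      · intro t ht
        exact ((hy' t ht).mul
          (((hasDerivAt_id t).const_mul (-κ)).exp)).continuousAt.continuousWithinAt
      · intro t ht
        rw [interior_Ici] at ht
        exact ((hg t (le_of_lt ht)).differentiableAt).differentiableWithinAt
      · intro t ht
        rw [interior_Ici] at ht
        rw [(hg t (le_of_lt ht)).deriv]
        exact mul_nonneg (mul_nonneg hlam.le (hpe.pow_nonneg _)) (Real.exp_pos _).le
    have hlb : ∀ t : ℝ, 0 ≤ t → y 0 * Real.exp (κ * t) ≤ y t := by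
      intro t ht
      have h1 : g 0 ≤ g t := hmono (self_mem_Ici) ht ht
      have h2 : y 0 ≤ y t * Real.exp (-κ * t) := by simpa [g] using h1
      calc y 0 * Real.exp (κ * t)
          ≤ (y t * Real.exp (-κ * t)) * Real.exp (κ * t) :=
            mul_le_mul_of_nonneg_right h2 (Real.exp_pos _).le
        _ = y t := by
            rw [mul_assoc, ← Real.exp_add, neg_mul, neg_add_cancel, Real.exp_zero, mul_one]
    have hlow : Tendsto (fun t => y 0 * Real.exp (κ * t)) atTop (nhds 0) := by
      have h1 : Tendsto (fun t : ℝ => κ * t) atTop atBot :=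
        (tendsto_const_mul_atBot_of_neg hκ).2 tendsto_id
      have h2 : Tendsto (fun t : ℝ => Real.exp (κ * t)) atTop (nhds 0) :=
        Real.tendsto_exp_atBot.comp h1
      simpa using h2.const_mul (y 0)
    refine tendsto_of_tendsto_of_tendsto_of_le_of_le' hlow tendsto_const_nhds ?_ ?_
    · filter_upwards [eventually_ge_atTop (0:ℝ)] with t ht using hlb t ht
    · filter_upwards [eventually_ge_atTop (0:ℝ)] with t ht using (hbelow t ht).le
  · -- zero case
    have hzz : ∀ t, 0 ≤ t → y t = 0 := myConstSol hFd hF'c hF0 hy' hzero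
    have : y =ᶠ[atTop] fun _ => (0:ℝ) := by
      filter_upwards [eventually_ge_atTop (0:ℝ)] with t ht using hzz t ht
    exact Tendsto.congr' this.symm tendsto_const_nhds
  · -- positive case : 0 < y 0
    have habove : ∀ t, 0 ≤ t → 0 < y t := myStaysAbove hFd hF'c hF0 hy' hpos
    have hanti : AntitoneOn y (Ici 0) := by
      apply antitoneOn_of_deriv_nonpos (convex_Ici 0)
      · intro t ht; exact (hy' t ht).continuousAt.continuousWithinAt
      · intro t ht
        rw [interior_Ici] at ht
        exact ((hy' t (le_of_lt ht)).differentiableAt).differentiableWithinAt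
      · intro t ht
        rw [interior_Ici] at ht
        rw [(hy' t (le_of_lt ht)).deriv]
        have h1 : y t ^ p ≤ c ^ p :=
          pow_le_pow_left₀ (habove t ht.le).le (hinv t ht.le).le p
        have h2 : 0 < y t := habove t ht.le
        simp only [F, pow_succ]
        nlinarith [mul_le_mul_of_nonneg_right (mul_le_mul_of_nonneg_left h1 hlam.le) h2.le, hlcp]
    have hyle : ∀ t, 0 ≤ t → y t ≤ y 0 := fun t ht => hanti self_mem_Ici ht ht
    set c0 : ℝ := y 0 with hc0def
    set κ' : ℝ := κ + lam * c0 ^ p with hκ'def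
    have hκ' : κ' < 0 := by
      have h1 : c0 ^ p < c ^ p := pow_lt_pow_left₀ hy0 hpos.le (by omega)
      nlinarith [hlcp]
    set g : ℝ → ℝ := fun t => y t * Real.exp (-κ' * t) with hgdef
    have hg : ∀ t : ℝ, 0 ≤ t → HasDerivAt g
        ((F (y t) - κ' * y t) * Real.exp (-κ' * t)) t := by
      intro t ht
      have he : HasDerivAt (fun t : ℝ => Real.exp (-κ' * t))
          (Real.exp (-κ' * t) * (-κ' * 1)) t := ((hasDerivAt_id t).const_mul (-κ')).exp
      have := (hy' t ht).mul he
      exact this.congr_deriv (by ring)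
    have hanti' : AntitoneOn g (Ici 0) := by
      apply antitoneOn_of_deriv_nonpos (convex_Ici 0)
      · intro t ht
        exact ((hy' t ht).mul
          (((hasDerivAt_id t).const_mul (-κ')).exp)).continuousAt.continuousWithinAt
      · intro t ht
        rw [interior_Ici] at ht
        exact ((hg t (le_of_lt ht)).differentiableAt).differentiableWithinAt
      · intro t ht
        rw [interior_Ici] at ht
        rw [(hg t (le_of_lt ht)).deriv]
        have h1 : y t ^ p ≤ c0 ^ p :=
          pow_le_pow_left₀ (habove t ht.le).le (hyle t ht.le) p
        have h2 : 0 < y t := habove t ht.le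
        have h3 : F (y t) - κ' * y t ≤ 0 := by
          simp only [F, hκ'def, pow_succ]
          nlinarith [mul_le_mul_of_nonneg_right (mul_le_mul_of_nonneg_left h1 hlam.le) h2.le]
        exact mul_nonpos_of_nonpos_of_nonneg h3 (Real.exp_pos _).le
    have hub : ∀ t : ℝ, 0 ≤ t → y t ≤ y 0 * Real.exp (κ' * t) := by
      intro t ht
      have h1 : g t ≤ g 0 := hanti' self_mem_Ici ht ht
      have h2 : y t * Real.exp (-κ' * t) ≤ y 0 := by simpa [g] using h1
      calc y t = (y t * Real.exp (-κ' * t)) * Real.exp (κ' * t) := by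
            rw [mul_assoc, ← Real.exp_add, neg_mul, neg_add_cancel, Real.exp_zero, mul_one]
        _ ≤ y 0 * Real.exp (κ' * t) :=
            mul_le_mul_of_nonneg_right h2 (Real.exp_pos _).le
    have hupper : Tendsto (fun t => y 0 * Real.exp (κ' * t)) atTop (nhds 0) := by
      have h1 : Tendsto (fun t : ℝ => κ' * t) atTop atBot :=
        (tendsto_const_mul_atBot_of_neg hκ').2 tendsto_id
      have h2 : Tendsto (fun t : ℝ => Real.exp (κ' * t)) atTop (nhds 0) :=
        Real.tendsto_exp_atBot.comp h1
      simpa using h2.const_mul (y 0)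
    refine tendsto_of_tendsto_of_tendsto_of_le_of_le' tendsto_const_nhds hupper ?_ ?_
    · filter_upwards [eventually_ge_atTop (0:ℝ)] with t ht using (habove t ht).le
    · filter_upwards [eventually_ge_atTop (0:ℝ)] with t ht using hub t ht
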